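/- Let θ = 2π/q with q odd, q ≥ n, and let i_0,...,i_{k-1} be distinct integers in {0,...,n-1}. Then the 2k×2k block matrix G̃ whose (a,b)-th 2×2 block is R_θ^{i_b·a} (powers of the rotation matrix) is nonsingular. -/

import Mathlib

open Matrix Complex Kronecker

noncomputable def RotC (θ : ℝ) : Matrix (Fin 2) (Fin 2) ℂ :=
  !![(Real.cos θ : ℂ), -(Real.sin θ : ℂ); (Real.sin θ : ℂ), (Real.cos θ : ℂ)]

noncomputable def Pm : Matrix (Fin 2) (Fin 2) ℂ := !![1, 1; -Complex.I, Complex.I]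

noncomputable def Dm (θ : ℝ) (m : ℕ) : Matrix (Fin 2) (Fin 2) ℂ :=
  !![Complex.exp ((θ : ℂ) * Complex.I) ^ m, 0; 0, Complex.exp (-((θ : ℂ) * Complex.I)) ^ m]

lemma rotC_mul_P (θ : ℝ) : RotC θ * Pm = Pm * Dm θ 1 := by
  have h1 : Complex.exp ((θ : ℂ) * Complex.I) = Real.cos θ + Real.sin θ * Complex.I := by
    rw [Complex.exp_mul_I]; push_cast [Complex.ofReal_cos, Complex.ofReal_sin]; ring
  have h2 : Complex.exp (-((θ : ℂ) * Complex.I)) = Real.cos θ - Real.sin θ * Complex.I := by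
    rw [show -((θ : ℂ) * Complex.I) = (-θ : ℂ) * Complex.I by ring, Complex.exp_mul_I,
      Complex.cos_neg, Complex.sin_neg]
    push_cast [Complex.ofReal_cos, Complex.ofReal_sin]; ring
  ext i j
  fin_cases i <;> fin_cases j <;>
    simp [RotC, Pm, Dm, Matrix.mul_apply, Fin.sum_univ_two, h1, h2] <;>
    first
      | ring1
      | linear_combination (Complex.sin (θ : ℂ)) * Complex.I_sq

lemma dm_mul (θ : ℝ) (m : ℕ) : Dm θ m * Dm θ 1 = Dm θ (m + 1) := by
  ext i j
  fin_cases i <;> fin_cases j <;>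
    simp [Dm, Matrix.mul_apply, Fin.sum_univ_two, pow_succ]

lemma rotC_pow_mul_P (θ : ℝ) (m : ℕ) : RotC θ ^ m * Pm = Pm * Dm θ m := by
  induction m with
  | zero =>
      have : Dm θ 0 = 1 := by
        ext i j; fin_cases i <;> fin_cases j <;> simp [Dm, Matrix.one_fin_two]
      simp [this]
  | succ m ih =>
      rw [pow_succ, Matrix.mul_assoc, rotC_mul_P, ← Matrix.mul_assoc, ih,
        Matrix.mul_assoc, dm_mul]

theorem stmt12 (q n k : ℕ) (hq : Odd q) (hq0 : 0 < q) (hn : n ≤ q)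
    (idx : Fin k → ℕ) (hinj : Function.Injective idx) (hlt : ∀ b, idx b < n)
    (G : Matrix (Fin k × Fin 2) (Fin k × Fin 2) ℝ)
    (hG : ∀ (a b : Fin k) (r c : Fin 2), G (a, r) (b, c) =
      ((!![Real.cos (2 * Real.pi / q), -Real.sin (2 * Real.pi / q);
           Real.sin (2 * Real.pi / q),  Real.cos (2 * Real.pi / q)]) ^
        (idx b * (a : ℕ))) r c) :
    G.det ≠ 0 := by
  set θ : ℝ := 2 * Real.pi / q with hθ
  -- complexified matrix
  set Gc : Matrix (Fin k × Fin 2) (Fin k × Fin 2) ℂ := G.map (Complex.ofRealHom) with hGcdef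
  have hdet : (G.det : ℂ) = Gc.det := Complex.ofRealHom.map_det G
  -- entries of Gc
  have hmapR : (!![Real.cos θ, -Real.sin θ; Real.sin θ, Real.cos θ]).map
      (Complex.ofRealHom : ℝ → ℂ) = RotC θ := by
    ext i j; fin_cases i <;> fin_cases j <;> simp [RotC, Matrix.map_apply]
  have hGc : ∀ (a b : Fin k) (r c : Fin 2), Gc (a, r) (b, c) =
      (RotC θ ^ (idx b * (a : ℕ))) r c := by
    intro a b r c
    have := (Complex.ofRealHom.mapMatrix :
        Matrix (Fin 2) (Fin 2) ℝ →+* Matrix (Fin 2) (Fin 2) ℂ).map_pow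
        (!![Real.cos θ, -Real.sin θ; Real.sin θ, Real.cos θ]) (idx b * (a : ℕ))
    simp only [RingHom.mapMatrix_apply] at this
    have hstep : Gc (a, r) (b, c) = Complex.ofRealHom (G (a, r) (b, c)) := rfl
    rw [hstep, hG a b r c, ← Matrix.map_apply (f := (Complex.ofRealHom : ℝ → ℂ)), this, hmapR]
  -- eigen-parameters
  set ζ : ℂ := Complex.exp ((θ : ℂ) * Complex.I) with hζdef
  have hζprim : IsPrimitiveRoot ζ q := by
    have := Complex.isPrimitiveRoot_exp q hq0.ne'
    convert this using 2
    push_cast [hθ]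
    ring
  have hζne : ζ ≠ 0 := Complex.exp_ne_zero _
  set d : Fin 2 → Fin k → ℂ := fun c b => if c = 0 then ζ ^ idx b else (ζ ^ idx b)⁻¹ with hd
  have hdinj : ∀ c, Function.Injective (d c) := by
    intro c b b' h
    apply hinj
    have key : ζ ^ idx b = ζ ^ idx b' := by
      by_cases hc : c = 0
      · simpa [hd, hc] using h
      · have := h
        simp only [hd, hc, if_neg hc] at this
        exact inv_injective this
    exact hζprim.pow_inj (lt_of_lt_of_le (hlt b) hn) (lt_of_lt_of_le (hlt b') hn) key
  -- the matrices Q and A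
  set Q : Matrix (Fin k × Fin 2) (Fin k × Fin 2) ℂ :=
    (1 : Matrix (Fin k) (Fin k) ℂ) ⊗ₖ Pm with hQ
  set A : Matrix (Fin k × Fin 2) (Fin k × Fin 2) ℂ :=
    fun p₁ p₂ => if p₁.2 = p₂.2 then d p₂.2 p₂.1 ^ (p₁.1 : ℕ) else 0 with hA
  -- key identity
  have hDmdiag : ∀ (b : Fin k) (a : Fin k) (r c : Fin 2),
      (Pm * Dm θ (idx b * (a : ℕ))) r c = Pm r c * d c b ^ (a : ℕ) := by
    intro b a r c
    have hpow : Complex.exp (-((θ : ℂ) * Complex.I)) ^ (idx b * (a : ℕ))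
        = ((ζ ^ idx b)⁻¹) ^ (a : ℕ) := by
      rw [Complex.exp_neg, ← hζdef, ← inv_pow, ← pow_mul]
    have hpow2 : ζ ^ (idx b * (a : ℕ)) = (ζ ^ idx b) ^ (a : ℕ) := pow_mul _ _ _
    fin_cases c <;>
      simp [Dm, Matrix.mul_apply, Fin.sum_univ_two, hd, hpow, hpow2, ← hζdef]
  have hmul : Gc * Q = Q * A := by
    ext ⟨a, r⟩ ⟨b, c⟩
    have lhs : (Gc * Q) (a, r) (b, c) = (RotC θ ^ (idx b * (a : ℕ)) * Pm) r c := by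
      rw [Matrix.mul_apply, Matrix.mul_apply, Fintype.sum_prod_type]
      rw [Finset.sum_eq_single b]
      · congr 1; ext c'; rw [hGc]; simp [hQ, Matrix.one_apply]
      · intro b' _ hb'
        simp [hQ, Matrix.one_apply, hb']
      · simp
    have rhs : (Q * A) (a, r) (b, c) = Pm r c * d c b ^ (a : ℕ) := by
      rw [Matrix.mul_apply, Fintype.sum_prod_type]
      rw [Finset.sum_eq_single a]
      · fin_cases c <;> simp [hQ, hA, Matrix.one_apply, Fin.sum_univ_two]
      · intro a' _ ha'
        simp [hQ, Matrix.one_apply, Ne.symm ha']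
      · simp
    rw [lhs, rhs, rotC_pow_mul_P, hDmdiag]
  -- determinants
  have hdetP : Pm.det = 2 * Complex.I := by
    simp [Pm, Matrix.det_fin_two_of]; ring
  have hdetQ : Q.det = (2 * Complex.I) ^ k := by
    rw [hQ, Matrix.det_kronecker, hdetP]
    simp
  have hdetQne : Q.det ≠ 0 := by
    rw [hdetQ]
    exact pow_ne_zero _ (by simp [Complex.I_ne_zero])
  have hAblock : A = Matrix.blockDiagonal
      (fun (c : Fin 2) => Matrix.of (fun (a b : Fin k) => d c b ^ (a : ℕ))) := by
    ext ⟨a, r⟩ ⟨b, c⟩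
    simp only [hA, Matrix.blockDiagonal_apply]
    split_ifs with h
    · subst h; rfl
    · rfl
  have hdetA : A.det ≠ 0 := by
    rw [hAblock, Matrix.det_blockDiagonal]
    apply Finset.prod_ne_zero_iff.2
    intro c _
    have : Matrix.of (fun (a b : Fin k) => d c b ^ (a : ℕ)) = (Matrix.vandermonde (d c))ᵀ := by
      ext a b; simp [Matrix.vandermonde]
    rw [this, Matrix.det_transpose]
    exact Matrix.det_vandermonde_ne_zero_iff.2 (hdinj c)
  have hGcdet : Gc.det = A.det := by
    have := congrArg Matrix.det hmul
    rw [Matrix.det_mul, Matrix.det_mul] at this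
    have h2 : Gc.det * Q.det = A.det * Q.det := by rw [this]; ring
    exact mul_right_cancel₀ hdetQne h2
  intro h0
  apply hdetA
  rw [← hGcdet, ← hdet, h0]
  simp
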